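/- Closed form of the entanglement entropy in the two-mode squeezing (black hole evaporation) toy model: for every t > 0, with λ_n(t) = tanh(t)^{2n} / cosh(t)², one has −∑_{n=0}^{∞} λ_n(t)·ln λ_n(t) = ln(cosh(t)²) − sinh(t)²·ln(tanh(t)²). -/

import Mathlib

/-- Closed form of the entanglement entropy in the two-mode squeezing (black hole
evaporation) toy model: for `t > 0`, with Schmidt eigenvalues
`λₙ(t) = tanh(t)^{2n} / cosh(t)²`,
`-∑ₙ λₙ ln λₙ = ln(cosh² t) - sinh² t · ln(tanh² t)`. -/
theorem two_mode_squeezing_entropy_closed_form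
    (t : ℝ) (ht : 0 < t)
    (lam : ℕ → ℝ)
    (hlam : ∀ n : ℕ, lam n = Real.tanh t ^ (2 * n) / Real.cosh t ^ 2) :
    ∑' n : ℕ, -(lam n * Real.log (lam n))
      = Real.log (Real.cosh t ^ 2) - Real.sinh t ^ 2 * Real.log (Real.tanh t ^ 2) := by
  have hc : 0 < Real.cosh t := Real.cosh_pos t
  have hs : 0 < Real.sinh t := Real.sinh_pos_iff.mpr ht
  have htanh : 0 < Real.tanh t := by
    rw [Real.tanh_eq_sinh_div_cosh]; positivity
  have htanh1 : Real.tanh t < 1 := by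
    rw [Real.tanh_eq_sinh_div_cosh]
    exact (div_lt_one hc).mpr (Real.sinh_lt_cosh t)
  set q : ℝ := Real.tanh t ^ 2 with hqdef
  have hq0 : 0 < q := by positivity
  have hq1 : q < 1 := by
    have := pow_lt_one₀ (le_of_lt htanh) htanh1 (two_ne_zero)
    simpa [hqdef] using this
  have h1q : (0:ℝ) < 1 - q := by linarith
  have hcs : Real.cosh t ^ 2 - Real.sinh t ^ 2 = 1 := Real.cosh_sq_sub_sinh_sq t
  -- 1 - q = 1 / cosh² t
  have hkey : 1 - q = (Real.cosh t ^ 2)⁻¹ := by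
    rw [hqdef, Real.tanh_eq_sinh_div_cosh, div_pow]
    field_simp
    exact hcs
  have hsinh : Real.sinh t ^ 2 = q / (1 - q) := by
    rw [hkey, hqdef, Real.tanh_eq_sinh_div_cosh, div_pow]
    field_simp
  have hcosh : Real.cosh t ^ 2 = (1 - q)⁻¹ := by
    rw [hkey, inv_inv]
  have hlam' : ∀ n : ℕ, lam n = (1 - q) * q ^ n := by
    intro n
    rw [hlam n, hkey, hqdef, pow_mul]
    ring
  have hterm : ∀ n : ℕ,
      -(lam n * Real.log (lam n))
        = ((1 - q) * (-Real.log q)) * ((n : ℝ) * q ^ n)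
          + ((1 - q) * (-Real.log (1 - q))) * q ^ n := by
    intro n
    rw [hlam' n, Real.log_mul (ne_of_gt h1q) (pow_ne_zero n (ne_of_gt hq0)),
      Real.log_pow]
    ring
  have hnorm : ‖q‖ < 1 := by rw [Real.norm_eq_abs, abs_of_pos hq0]; exact hq1
  have hsum1 : Summable (fun n : ℕ => (n : ℝ) * q ^ n) := by
    simpa using summable_pow_mul_geometric_of_norm_lt_one 1 hnorm
  have hsum2 : Summable (fun n : ℕ => q ^ n) := summable_geometric_of_lt_one hq0.le hq1
  calc ∑' n : ℕ, -(lam n * Real.log (lam n))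
      = ∑' n : ℕ, (((1 - q) * (-Real.log q)) * ((n : ℝ) * q ^ n)
          + ((1 - q) * (-Real.log (1 - q))) * q ^ n) := by
        exact tsum_congr hterm
    _ = ((1 - q) * (-Real.log q)) * (q / (1 - q) ^ 2)
          + ((1 - q) * (-Real.log (1 - q))) * (1 - q)⁻¹ := by
        rw [Summable.tsum_add (hsum1.mul_left _) (hsum2.mul_left _),
          tsum_mul_left, tsum_mul_left,
          tsum_coe_mul_geometric_of_norm_lt_one hnorm,
          tsum_geometric_of_lt_one hq0.le hq1]
    _ = Real.log (Real.cosh t ^ 2) - Real.sinh t ^ 2 * Real.log (Real.tanh t ^ 2) := by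
        rw [hcosh, hsinh, ← hqdef, Real.log_inv]
        field_simp
        ring
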